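/- arXiv:1705.05932 — 3 statements merged into one kernel-verified Lean document; each statement's English description precedes it below -/
import Mathlib

section
/- For fixed reals x, y > 0 with x ≠ y, the Dirichlet free-fermion kernel K^D(u,v) = (1/π) ∑_{k=1}^{N} sin(ku/2) sin(kv/2) satisfies lim_{N→∞} (2π/N) K^D(2πx/N, 2πy/N) = sin(π(x-y))/(π(x-y)) - sin(π(x+y))/(π(x+y)). -/
open Real Finset Filter

private lemma sum_cos_mul (θ : ℝ) : ∀ N : ℕ,
    (∑ k ∈ Finset.Icc 1 N, Real.cos (k * θ)) * (2 * Real.sin (θ / 2))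
      = Real.sin (((N : ℝ) + 1 / 2) * θ) - Real.sin (θ / 2) := by
  intro N
  induction N with
  | zero => norm_num [show (1:ℝ)/2*θ = θ/2 by ring]
  | succ n ih =>
    rw [Finset.sum_Icc_succ_top (Nat.one_le_iff_ne_zero.mpr (Nat.succ_ne_zero n)),
      add_mul, ih]
    have h := Real.sin_sub_sin (((n : ℝ) + 1 + 1 / 2) * θ) (((n : ℝ) + 1 / 2) * θ)
    have h1 : ((((n : ℝ) + 1 + 1 / 2) * θ - ((n : ℝ) + 1 / 2) * θ) / 2) = θ / 2 := by ring
    have h2 : ((((n : ℝ) + 1 + 1 / 2) * θ + ((n : ℝ) + 1 / 2) * θ) / 2) = ((n : ℝ) + 1) * θ := by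
      ring
    rw [h1, h2] at h
    push_cast
    rw [show ((n : ℝ) + 1) * θ = ((n : ℝ) + 1) * θ from rfl]
    nlinarith [h]

private lemma aux_cos_sum (c : ℝ) (hc : c ≠ 0) :
    Tendsto (fun N : ℕ => (1 / (N : ℝ)) * ∑ k ∈ Finset.Icc 1 N, Real.cos (k * c / N))
      atTop (nhds (Real.sin c / c)) := by
  -- slope limit of sin at 0
  have hslope : Tendsto (fun t : ℝ => Real.sin t / t) (nhdsWithin 0 {(0:ℝ)}ᶜ) (nhds 1) := by
    have h := Real.hasDerivAt_sin 0
    rw [hasDerivAt_iff_tendsto_slope] at h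
    simp only [Real.cos_zero] at h
    refine h.congr fun t => ?_
    simp [slope_def_field, div_eq_div_iff]
  have ht : Tendsto (fun N : ℕ => c / (2 * (N : ℝ))) atTop (nhdsWithin 0 {(0:ℝ)}ᶜ) := by
    apply tendsto_nhdsWithin_of_tendsto_nhds_of_eventually_within
    · exact Tendsto.div_atTop tendsto_const_nhds
        (Tendsto.const_mul_atTop two_pos tendsto_natCast_atTop_atTop)
    · filter_upwards [eventually_gt_atTop 0] with N hN
      have hN' : (0:ℝ) < N := by exact_mod_cast hN
      exact div_ne_zero hc (by positivity)
  have hden : Tendsto (fun N : ℕ => 2 * (N : ℝ) * Real.sin (c / (2 * N))) atTop (nhds c) := by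
    have h := (hslope.comp ht).const_mul c
    rw [mul_one] at h
    refine h.congr' ?_
    filter_upwards [eventually_gt_atTop 0] with N hN
    have hN' : (0:ℝ) < N := by exact_mod_cast hN
    have h2N : (2 * (N:ℝ)) ≠ 0 := by positivity
    simp only [Function.comp]
    rw [div_div_eq_mul_div, mul_comm]
    field_simp
  have ht0 : Tendsto (fun N : ℕ => c / (2 * (N : ℝ))) atTop (nhds 0) :=
    Tendsto.div_atTop tendsto_const_nhds
      (Tendsto.const_mul_atTop two_pos tendsto_natCast_atTop_atTop)
  have hnum : Tendsto (fun N : ℕ =>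
      Real.sin (((N : ℝ) + 1 / 2) * (c / N)) - Real.sin (c / (2 * N))) atTop
      (nhds (Real.sin c - 0)) := by
    refine Tendsto.sub ?_ ?_
    · have harg : Tendsto (fun N : ℕ => ((N : ℝ) + 1 / 2) * (c / N)) atTop (nhds c) := by
        have h := tendsto_const_nhds.add ht0 (f := fun _ : ℕ => c)
        rw [add_zero] at h
        refine h.congr' ?_
        filter_upwards [eventually_gt_atTop 0] with N hN
        have hN' : (N:ℝ) ≠ 0 := by positivity
        field_simp
      exact (Real.continuous_sin.continuousAt.tendsto).comp harg
    · have := (Real.continuous_sin.continuousAt.tendsto).comp ht0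
      simpa [Function.comp_def] using this
  have key := hnum.div hden hc
  rw [sub_zero] at key
  refine key.congr' ?_
  have hbig : ∀ᶠ N : ℕ in atTop, |c| / (2 * Real.pi) < (N : ℝ) :=
    tendsto_natCast_atTop_atTop.eventually_gt_atTop _
  filter_upwards [eventually_gt_atTop 0, hbig] with N hN hNbig
  have hN' : (0:ℝ) < N := by exact_mod_cast hN
  have hNne : (N:ℝ) ≠ 0 := hN'.ne'
  -- sin (c/(2N)) ≠ 0
  have habs : |c / (2 * (N:ℝ))| < Real.pi := by
    rw [abs_div, abs_of_pos (by positivity : (0:ℝ) < 2 * (N:ℝ))]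
    rw [div_lt_iff₀ (by positivity : (0:ℝ) < 2 * (N:ℝ))]
    have := (div_lt_iff₀ (by positivity : (0:ℝ) < 2 * Real.pi)).mp hNbig
    nlinarith [Real.pi_pos]
  have hargne : c / (2 * (N:ℝ)) ≠ 0 := div_ne_zero hc (by positivity)
  have hsin : Real.sin (c / (2 * (N:ℝ))) ≠ 0 := by
    rw [Ne, Real.sin_eq_zero_iff_of_lt_of_lt (neg_lt_of_abs_lt habs) (lt_of_abs_lt habs)]
    exact hargne
  have hdenne : 2 * (N:ℝ) * Real.sin (c / (2 * N)) ≠ 0 := by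
    exact mul_ne_zero (by positivity) hsin
  have hkey := sum_cos_mul (c / N) N
  have hhalf : (c / (N:ℝ)) / 2 = c / (2 * N) := by ring
  rw [hhalf] at hkey
  rw [Pi.div_apply]
  symm
  rw [eq_div_iff hdenne, ← hkey]
  have hterm : ∀ k ∈ Finset.Icc 1 N, Real.cos ((k:ℝ) * c / N) = Real.cos ((k:ℝ) * (c / N)) := by
    intro k _
    rw [mul_div_assoc]
  rw [Finset.sum_congr rfl hterm]
  field_simp
  ring_nf
  have e : ∀ k : ℕ, (k:ℝ) * c * (N:ℝ)⁻¹ = c * (N:ℝ)⁻¹ * k := fun k => by ring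
  simp only [e]
  ring

theorem dirichlet_edge_scaling_to_bessel (x y : ℝ) (hx : 0 < x) (hy : 0 < y)
    (hxy : x ≠ y) :
    Tendsto
      (fun N : ℕ => (2 * Real.pi / N) *
        ((1 / Real.pi) * ∑ k ∈ Finset.Icc 1 N,
          Real.sin (k * (2 * Real.pi * x / N) / 2) *
            Real.sin (k * (2 * Real.pi * y / N) / 2)))
      atTop
      (nhds (Real.sin (Real.pi * (x - y)) / (Real.pi * (x - y)) -
        Real.sin (Real.pi * (x + y)) / (Real.pi * (x + y)))) := by
  set c := Real.pi * (x - y) with hc_def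
  set d := Real.pi * (x + y) with hd_def
  have hc : c ≠ 0 := mul_ne_zero Real.pi_ne_zero (sub_ne_zero.mpr hxy)
  have hd : d ≠ 0 := mul_ne_zero Real.pi_ne_zero (by positivity)
  have h := (aux_cos_sum c hc).sub (aux_cos_sum d hd)
  refine h.congr' ?_
  filter_upwards [eventually_gt_atTop 0] with N hN
  have hN' : (0:ℝ) < N := by exact_mod_cast hN
  have hNne : (N:ℝ) ≠ 0 := hN'.ne'
  have hsum : ∑ k ∈ Finset.Icc 1 N,
      Real.sin ((k:ℝ) * (2 * Real.pi * x / N) / 2) *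
        Real.sin ((k:ℝ) * (2 * Real.pi * y / N) / 2)
      = ∑ k ∈ Finset.Icc 1 N,
        (Real.cos ((k:ℝ) * c / N) - Real.cos ((k:ℝ) * d / N)) / 2 := by
    refine Finset.sum_congr rfl fun k _ => ?_
    have h := Real.cos_sub_cos ((k:ℝ) * c / N) ((k:ℝ) * d / N)
    have h1 : (((k:ℝ) * c / N + (k:ℝ) * d / N) / 2) = (k:ℝ) * (2 * Real.pi * x / N) / 2 := by
      rw [hc_def, hd_def]; ring
    have h2 : (((k:ℝ) * c / N - (k:ℝ) * d / N) / 2) = -((k:ℝ) * (2 * Real.pi * y / N) / 2) := by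
      rw [hc_def, hd_def]; ring
    rw [h1, h2, Real.sin_neg] at h
    linarith [h]
  rw [hsum, ← Finset.sum_div, Finset.sum_sub_distrib]
  have hpi : Real.pi ≠ 0 := Real.pi_ne_zero
  field_simp
  ring_nf
  have e1 : ∀ k : ℕ, (k:ℝ) * c * (N:ℝ)⁻¹ = c * (N:ℝ)⁻¹ * k := fun k => by ring
  have e2 : ∀ k : ℕ, (N:ℝ)⁻¹ * k * d = (N:ℝ)⁻¹ * d * k := fun k => by ring
  simp only [e1, e2]
end

section
/- For all real x ≠ y, the boundary-value limit of the free resolvent kernel satisfies (1/π) lim_{η↓0} Im[G_{ε+iη}(x,y)] = cos((x-y)√ε)/(2π√ε) for ε > 0, and the limit is 0 for ε < 0, where G_z(x,y) = i e^{i|x-y|√z}/(2√z) with the principal branch of √z on the upper half plane. -/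
open Complex Filter Topology Real

/-- The free resolvent kernel `G_z(x,y) = i e^{i|x-y|√z}/(2√z)` on the real line,
with the principal branch of the square root. -/
noncomputable def freeResolventKernel (z : ℂ) (x y : ℝ) : ℂ :=
  Complex.I * Complex.exp (Complex.I * |x - y| * z ^ (1/2 : ℂ)) / (2 * z ^ (1/2 : ℂ))

lemma aux_kernel_tendsto (x y : ℝ) (ε : ℝ) {w : ℂ} (hw : w ≠ 0)
    (h : Tendsto (fun η : ℝ => ((ε : ℂ) + η * Complex.I) ^ (1/2 : ℂ)) (𝓝[>] 0) (𝓝 w)) :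
    Tendsto (fun η : ℝ => (1 / Real.pi) * (freeResolventKernel (ε + η * Complex.I) x y).im)
      (𝓝[>] 0)
      (𝓝 ((1 / Real.pi) *
        (Complex.I * Complex.exp (Complex.I * (↑|x - y| : ℂ) * w) / (2 * w)).im)) := by
  have hF : Tendsto (fun u : ℂ => Complex.I * Complex.exp (Complex.I * (↑|x - y| : ℂ) * u)
      / (2 * u)) (𝓝 w)
      (𝓝 (Complex.I * Complex.exp (Complex.I * (↑|x - y| : ℂ) * w) / (2 * w))) := by
    apply Tendsto.div
    · have hcont : Continuous (fun u : ℂ =>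
        Complex.I * Complex.exp (Complex.I * (↑|x - y| : ℂ) * u)) := by continuity
      exact hcont.tendsto w
    · exact (continuous_const.mul continuous_id).tendsto w
    · simpa using hw
  exact tendsto_const_nhds.mul ((Complex.continuous_im.tendsto _).comp (hF.comp h))

lemma aux_sqrt_pos {ε : ℝ} (hε : 0 < ε) :
    Tendsto (fun η : ℝ => ((ε : ℂ) + η * Complex.I) ^ (1/2 : ℂ)) (𝓝[>] 0)
      (𝓝 (Real.sqrt ε : ℂ)) := by
  have hc : ContinuousAt (fun z : ℂ => z ^ (1/2 : ℂ)) (ε : ℂ) := by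
    apply continuousAt_cpow_const
    left; simpa using hε
  have hcomp : Tendsto (fun η : ℝ => ((ε : ℂ) + η * Complex.I)) (𝓝 0) (𝓝 (ε : ℂ)) := by
    have : Continuous (fun η : ℝ => ((ε : ℂ) + η * Complex.I)) := by continuity
    simpa using this.tendsto 0
  have h := hc.tendsto.comp
    (hcomp.mono_left (nhdsWithin_le_nhds : 𝓝[>] (0:ℝ) ≤ 𝓝 0))
  have hval : ((ε : ℂ)) ^ (1/2 : ℂ) = (Real.sqrt ε : ℂ) := by
    rw [show ((1/2 : ℂ)) = ((1/2 : ℝ) : ℂ) by norm_num, ← Complex.ofReal_cpow hε.le,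
      Real.sqrt_eq_rpow]
  have h2 : Tendsto (fun η : ℝ => ((ε : ℂ) + η * Complex.I) ^ (1/2 : ℂ)) (𝓝[>] 0)
      (𝓝 ((ε : ℂ) ^ (1/2 : ℂ))) := h
  rwa [hval] at h2

lemma aux_sqrt_neg {ε : ℝ} (hε : ε < 0) :
    Tendsto (fun η : ℝ => ((ε : ℂ) + η * Complex.I) ^ (1/2 : ℂ)) (𝓝[>] 0)
      (𝓝 (Complex.I * Real.sqrt (-ε))) := by
  have hne : ∀ᶠ z : ℂ in 𝓝[{z : ℂ | 0 ≤ z.im}] (ε : ℂ), z ≠ 0 := by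
    apply eventually_nhdsWithin_of_eventually_nhds
    exact eventually_ne_nhds (by exact_mod_cast hε.ne)
  have harg : Tendsto Complex.arg (𝓝[{z : ℂ | 0 ≤ z.im}] (ε : ℂ)) (𝓝 Real.pi) :=
    Complex.tendsto_arg_nhdsWithin_im_nonneg_of_re_neg_of_im_zero (by simpa using hε) (by simp)
  have habs : Tendsto (fun z : ℂ => ‖z‖) (𝓝[{z : ℂ | 0 ≤ z.im}] (ε : ℂ))
      (𝓝 ‖(ε : ℂ)‖) := (continuous_norm.tendsto _).mono_left nhdsWithin_le_nhds
  have hlog : Tendsto Complex.log (𝓝[{z : ℂ | 0 ≤ z.im}] (ε : ℂ))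
      (𝓝 ((Real.log (-ε) : ℂ) + (Real.pi : ℂ) * Complex.I)) := by
    have hmain : Tendsto (fun z : ℂ => ((Real.log ‖z‖ : ℝ) : ℂ)
        + (z.arg : ℂ) * Complex.I)
        (𝓝[{z : ℂ | 0 ≤ z.im}] (ε : ℂ))
        (𝓝 ((Real.log (-ε) : ℂ) + (Real.pi : ℂ) * Complex.I)) := by
      apply Tendsto.add
      · have h1 : ‖(ε : ℂ)‖ = -ε := by
          rw [Complex.norm_real, Real.norm_eq_abs, abs_of_neg hε]
        have h2 : Tendsto (fun z : ℂ => Real.log ‖z‖)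
            (𝓝[{z : ℂ | 0 ≤ z.im}] (ε : ℂ)) (𝓝 (Real.log (-ε))) := by
          have := (Real.continuousAt_log (by rw [h1]; exact (by linarith : (-ε:ℝ) ≠ 0))).tendsto.comp habs
          rwa [h1] at this
        exact (Complex.continuous_ofReal.tendsto _).comp h2
      · exact ((Complex.continuous_ofReal.tendsto _).comp harg).mul_const _
    refine hmain.congr' ?_
    filter_upwards [hne] with z hz
    rw [Complex.log]
  have hcpow : Tendsto (fun z : ℂ => z ^ (1/2 : ℂ)) (𝓝[{z : ℂ | 0 ≤ z.im}] (ε : ℂ))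
      (𝓝 (Complex.I * Real.sqrt (-ε))) := by
    have hmain : Tendsto (fun z : ℂ => Complex.exp (Complex.log z * (1/2 : ℂ)))
        (𝓝[{z : ℂ | 0 ≤ z.im}] (ε : ℂ))
        (𝓝 (Complex.exp (((Real.log (-ε) : ℂ) + (Real.pi : ℂ) * Complex.I) * (1/2 : ℂ)))) :=
      (Complex.continuous_exp.tendsto _).comp (hlog.mul_const _)
    have hval : Complex.exp (((Real.log (-ε) : ℂ) + (Real.pi : ℂ) * Complex.I) * (1/2 : ℂ))
        = Complex.I * Real.sqrt (-ε) := by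
      rw [add_mul, Complex.exp_add]
      have h1 : ((Real.log (-ε) : ℂ)) * (1/2 : ℂ) = ((Real.log (-ε) / 2 : ℝ) : ℂ) := by
        push_cast; ring
      have h2 : (Real.pi : ℂ) * Complex.I * (1/2 : ℂ) = ((Real.pi / 2 : ℝ) : ℂ) * Complex.I := by
        push_cast; ring
      have h3 : Real.sqrt (-ε) = Real.exp (Real.log (-ε) / 2) := by
        rw [Real.sqrt_eq_rpow, Real.rpow_def_of_pos (by linarith), mul_one_div]
      rw [h1, h2, Complex.exp_mul_I, ← Complex.ofReal_cos, ← Complex.ofReal_sin,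
        Real.cos_pi_div_two, Real.sin_pi_div_two, ← Complex.ofReal_exp, h3]
      push_cast; ring
    rw [← hval]
    refine hmain.congr' ?_
    filter_upwards [hne] with z hz
    rw [Complex.cpow_def_of_ne_zero hz]
  have hcomp : Tendsto (fun η : ℝ => ((ε : ℂ) + η * Complex.I)) (𝓝[>] 0)
      (𝓝[{z : ℂ | 0 ≤ z.im}] (ε : ℂ)) := by
    rw [tendsto_nhdsWithin_iff]
    constructor
    · have : Continuous (fun η : ℝ => ((ε : ℂ) + η * Complex.I)) := by continuity
      simpa using (this.tendsto 0).mono_left nhdsWithin_le_nhds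
    · filter_upwards [self_mem_nhdsWithin] with η hη
      simp [Set.mem_setOf_eq, (le_of_lt hη : (0:ℝ) ≤ η)]
  exact hcpow.comp hcomp

theorem free_resolvent_boundary_values (x y : ℝ) (hxy : x ≠ y) (ε : ℝ) :
    (0 < ε →
      Tendsto (fun η : ℝ => (1 / Real.pi) * (freeResolventKernel (ε + η * Complex.I) x y).im)
        (𝓝[>] 0)
        (𝓝 (Real.cos ((x - y) * Real.sqrt ε) / (2 * Real.pi * Real.sqrt ε)))) ∧
    (ε < 0 →
      Tendsto (fun η : ℝ => (1 / Real.pi) * (freeResolventKernel (ε + η * Complex.I) x y).im)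
        (𝓝[>] 0) (𝓝 0)) := by
  constructor
  · intro hε
    have hs : (0:ℝ) < Real.sqrt ε := Real.sqrt_pos.2 hε
    have key := aux_kernel_tendsto x y ε (w := (Real.sqrt ε : ℂ))
      (by exact_mod_cast hs.ne') (aux_sqrt_pos hε)
    convert key using 2
    have h1 : Complex.I * (↑|x - y| : ℂ) * (Real.sqrt ε : ℂ)
        = ((|x - y| * Real.sqrt ε : ℝ) : ℂ) * Complex.I := by push_cast; ring
    have h2 : (2 : ℂ) * (Real.sqrt ε : ℂ) = ((2 * Real.sqrt ε : ℝ) : ℂ) := by push_cast; ring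
    rw [h1, h2, Complex.div_ofReal_im]
    have h3 : (Complex.I * Complex.exp (((|x - y| * Real.sqrt ε : ℝ) : ℂ) * Complex.I)).im
        = Real.cos (|x - y| * Real.sqrt ε) := by
      rw [Complex.mul_im, Complex.I_re, Complex.I_im, Complex.exp_ofReal_mul_I_re]
      ring
    rw [h3]
    have h4 : Real.cos (|x - y| * Real.sqrt ε) = Real.cos ((x - y) * Real.sqrt ε) := by
      have h5 : |x - y| * Real.sqrt ε = |(x - y) * Real.sqrt ε| := by
        rw [abs_mul, _root_.abs_of_nonneg hs.le]
      rw [h5, Real.cos_abs]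
    rw [h4]
    field_simp
  · intro hε
    have hb : (0:ℝ) < Real.sqrt (-ε) := Real.sqrt_pos.2 (by linarith)
    have hbc : ((Real.sqrt (-ε) : ℝ) : ℂ) ≠ 0 := by exact_mod_cast hb.ne'
    have hw : (Complex.I * (Real.sqrt (-ε) : ℂ)) ≠ 0 := mul_ne_zero Complex.I_ne_zero hbc
    have key := aux_kernel_tendsto x y ε hw (aux_sqrt_neg hε)
    convert key using 2
    have h1 : Complex.I * (↑|x - y| : ℂ) * (Complex.I * (Real.sqrt (-ε) : ℂ))
        = ((-(|x - y| * Real.sqrt (-ε)) : ℝ) : ℂ) := by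
      rw [show Complex.I * (↑|x - y| : ℂ) * (Complex.I * (Real.sqrt (-ε) : ℂ))
        = Complex.I * Complex.I * ((↑|x - y| : ℂ) * (Real.sqrt (-ε) : ℂ)) by ring,
        Complex.I_mul_I]
      push_cast; ring
    have hval : Complex.I * Complex.exp (Complex.I * (↑|x - y| : ℂ)
          * (Complex.I * (Real.sqrt (-ε) : ℂ)))
        / (2 * (Complex.I * (Real.sqrt (-ε) : ℂ)))
        = ((Real.exp (-(|x - y| * Real.sqrt (-ε))) / (2 * Real.sqrt (-ε)) : ℝ) : ℂ) := by
      rw [h1, ← Complex.ofReal_exp, div_eq_iff (by simpa using hw)]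
      push_cast
      field_simp
    rw [hval, Complex.ofReal_im, mul_zero]
end

section
/- Fix N ∈ ℕ and set μ(T) = T·log((2N+1)/√(πT)). Then for each fixed real x, the finite temperature CUE kernel K_{CUE(T,μ)}(x,x) = (1/(2π)) ∑_{k∈ℤ} 1/(1 + e^{-(μ(T) - k²)/T}) converges to (2N+1)/(2π) as T → ∞. -/
open Real Filter Topology

lemma summable_gauss {a : ℝ} (ha : 0 < a) : Summable fun k : ℤ => Real.exp (-a * (k:ℝ)^2) := by
  have hnat : Summable fun n : ℕ => Real.exp (-a * (n:ℝ)^2) := by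
    refine Summable.of_nonneg_of_le (fun n => (Real.exp_pos _).le) (fun n => ?_)
      (summable_geometric_of_lt_one (Real.exp_pos (-a)).le
        (Real.exp_lt_one_iff.mpr (by linarith)))
    have h1 : Real.exp (-a * (n:ℝ)^2) = Real.exp (-a) ^ (n^2) := by
      rw [← Real.exp_nat_mul]; push_cast; ring_nf
    rw [h1]
    exact pow_le_pow_of_le_one (Real.exp_pos _).le
      (Real.exp_le_one_iff.mpr (by linarith)) (Nat.le_self_pow two_ne_zero n)
  refine Summable.of_nat_of_neg hnat ?_
  simpa [neg_sq] using hnat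

lemma theta_tendsto :
    Tendsto (fun T : ℝ => ∑' k : ℤ, Real.exp (-(π^2*T) * (k:ℝ)^2)) atTop (𝓝 1) := by
  have h : Tendsto (fun T : ℝ => ∑' k : ℤ, Real.exp (-(π^2*T) * (k:ℝ)^2)) atTop
      (𝓝 (∑' k : ℤ, if k = 0 then (1:ℝ) else 0)) := by
    apply tendsto_tsum_of_dominated_convergence
      (bound := fun k : ℤ => Real.exp (-π^2 * (k:ℝ)^2))
    · exact summable_gauss (a := π^2) (by positivity)
    · intro k
      rcases eq_or_ne k 0 with rfl | hk
      · simpa using tendsto_const_nhds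
      · simp only [hk, if_false]
        have hk2 : (0:ℝ) < (k:ℝ)^2 := by
          have : (k:ℝ) ≠ 0 := Int.cast_ne_zero.mpr hk
          positivity
        have : Tendsto (fun T : ℝ => -(π^2*T) * (k:ℝ)^2) atTop atBot := by
          have h1 : Tendsto (fun T : ℝ => (π^2 * (k:ℝ)^2) * T) atTop atTop :=
            Tendsto.const_mul_atTop (by positivity) tendsto_id
          have := tendsto_neg_atTop_atBot.comp h1
          convert this using 2 with T
          simp; ring
        exact Real.tendsto_exp_atBot.comp this
    · filter_upwards [eventually_ge_atTop (1:ℝ)] with T hT k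
      rw [Real.norm_eq_abs, abs_of_pos (Real.exp_pos _)]
      apply Real.exp_le_exp.mpr
      have : (0:ℝ) ≤ (k:ℝ)^2 := sq_nonneg _
      nlinarith [mul_nonneg (mul_nonneg (sq_nonneg π) (sub_nonneg.mpr hT)) (sq_nonneg (k:ℝ))]
  simpa [tsum_ite_eq (0:ℤ) (fun _ => (1:ℝ))] using h

lemma poisson {T : ℝ} (hT : 0 < T) :
    ∑' k : ℤ, Real.exp (-(1/T) * (k:ℝ)^2)
      = Real.sqrt (π*T) * ∑' k : ℤ, Real.exp (-(π^2*T) * (k:ℝ)^2) := by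
  have hπT : (0:ℝ) < π * T := by positivity
  have h := Real.tsum_exp_neg_mul_int_sq (a := 1/(π*T)) (by positivity)
  have e1 : (-π * (1/(π*T)) : ℝ) = -(1/T) := by field_simp
  have e2 : (-π / (1/(π*T)) : ℝ) = -(π^2*T) := by field_simp
  have e3 : (1:ℝ) / ((1/(π*T)) ^ (1/2:ℝ)) = Real.sqrt (π*T) := by
    rw [Real.sqrt_eq_rpow, one_div (π*T), Real.inv_rpow hπT.le]
    simp
  rw [e1, e2] at h
  rw [h, e3]

lemma inv_bounds {x : ℝ} (hx : 0 < x) :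
    1/x - 1/x^2 ≤ 1/(1+x) ∧ 1/(1+x) ≤ 1/x := by
  have h1 : (0:ℝ) < 1 + x := by linarith
  have h2 : (0:ℝ) < x^2 := by positivity
  constructor
  · rw [div_sub_div _ _ (ne_of_gt hx) (ne_of_gt h2), div_le_div_iff₀ (by positivity) h1]
    nlinarith
  · rw [div_le_div_iff₀ h1 hx]; nlinarith

theorem finite_temperature_cue_diagonal_high_T (N : ℕ) :
    Tendsto
      (fun T : ℝ => (1 / (2 * Real.pi)) * ∑' k : ℤ,
        1 / (1 + Real.exp (-(T * Real.log ((2 * N + 1) / Real.sqrt (Real.pi * T)) -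
          (k : ℝ) ^ 2) / T)))
      atTop (𝓝 ((2 * N + 1) / (2 * Real.pi))) := by
  have h2N : (0:ℝ) < 2 * N + 1 := by positivity
  set θ : ℝ → ℝ := fun T => ∑' k : ℤ, Real.exp (-(π^2*T) * (k:ℝ)^2) with hθ
  have hθt : Tendsto θ atTop (𝓝 1) := theta_tendsto
  have key : Tendsto (fun T : ℝ => ∑' k : ℤ,
      1 / (1 + Real.exp (-(T * Real.log ((2 * N + 1) / Real.sqrt (Real.pi * T)) -
        (k : ℝ) ^ 2) / T))) atTop (𝓝 (2 * N + 1)) := by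
    have hU : Tendsto (fun T => (2*N+1 : ℝ) * θ T) atTop (𝓝 (2*N+1)) := by
      simpa only [mul_one] using hθt.const_mul (2*N+1 : ℝ)
    have hzero : Tendsto (fun T => (2*N+1:ℝ)^2 * θ T / Real.sqrt (π*T)) atTop (𝓝 0) := by
      apply Tendsto.div_atTop
        (by simpa only [mul_one] using hθt.const_mul ((2*N+1:ℝ)^2))
      have hsq : Tendsto Real.sqrt atTop atTop := by
        refine (tendsto_rpow_atTop (by norm_num : (0:ℝ) < 1/2)).congr' ?_
        filter_upwards [eventually_ge_atTop (0:ℝ)] with x hx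
        exact (Real.sqrt_eq_rpow x).symm
      exact hsq.comp (Tendsto.const_mul_atTop pi_pos tendsto_id)
    have hL : Tendsto (fun T => (2*N+1 : ℝ) * θ T - (2*N+1:ℝ)^2 * θ T / Real.sqrt (π*T))
        atTop (𝓝 (2*N+1)) := by simpa only [sub_zero] using hU.sub hzero
    have hbound : ∀ᶠ T in atTop,
        ((2*N+1 : ℝ) * θ T - (2*N+1:ℝ)^2 * θ T / Real.sqrt (π*T)
            ≤ ∑' k : ℤ, 1 / (1 + Real.exp (-(T * Real.log ((2*N+1) / Real.sqrt (π*T)) -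
              (k:ℝ)^2) / T)) ∧
          (∑' k : ℤ, 1 / (1 + Real.exp (-(T * Real.log ((2*N+1) / Real.sqrt (π*T)) -
              (k:ℝ)^2) / T))) ≤ (2*N+1 : ℝ) * θ T) := by
      filter_upwards [eventually_ge_atTop (1:ℝ)] with T hT1
      have hT : (0:ℝ) < T := by linarith
      have hs : (0:ℝ) < Real.sqrt (π*T) := Real.sqrt_pos.mpr (by positivity)
      set c : ℝ := Real.sqrt (π*T) / (2*N+1) with hc
      have hcpos : 0 < c := by positivity
      have hrw : ∀ k : ℤ, Real.exp (-(T * Real.log ((2*N+1) / Real.sqrt (π*T)) - (k:ℝ)^2) / T)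
          = c * Real.exp ((1/T) * (k:ℝ)^2) := by
        intro k
        have harg : -(T * Real.log ((2*N+1) / Real.sqrt (π*T)) - (k:ℝ)^2) / T
            = -Real.log ((2*N+1) / Real.sqrt (π*T)) + (1/T) * (k:ℝ)^2 := by
          field_simp; ring
        rw [harg, Real.exp_add, Real.exp_neg, Real.exp_log (by positivity), inv_div]
      have hfb : ∀ k : ℤ,
          (1/c) * Real.exp (-(1/T) * (k:ℝ)^2) - (1/c^2) * Real.exp (-(2/T) * (k:ℝ)^2)
            ≤ 1 / (1 + Real.exp (-(T * Real.log ((2*N+1) / Real.sqrt (π*T)) - (k:ℝ)^2) / T)) ∧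
          1 / (1 + Real.exp (-(T * Real.log ((2*N+1) / Real.sqrt (π*T)) - (k:ℝ)^2) / T))
            ≤ (1/c) * Real.exp (-(1/T) * (k:ℝ)^2) := by
        intro k
        rw [hrw k]
        set y : ℝ := (1/T) * (k:ℝ)^2 with hy
        have hxpos : 0 < c * Real.exp y := by positivity
        have e1 : (1:ℝ) / (c * Real.exp y) = (1/c) * Real.exp (-(1/T) * (k:ℝ)^2) := by
          rw [show (-(1/T) * (k:ℝ)^2) = -y by ring, Real.exp_neg]
          field_simp
        have e2 : (1:ℝ) / (c * Real.exp y)^2 = (1/c^2) * Real.exp (-(2/T) * (k:ℝ)^2) := by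
          rw [show (-(2/T) * (k:ℝ)^2) = -y + -y by ring, Real.exp_add, Real.exp_neg]
          field_simp
        obtain ⟨hlo, hhi⟩ := inv_bounds hxpos
        rw [e1, e2] at hlo
        rw [e1] at hhi
        exact ⟨hlo, hhi⟩
      have hs1 : Summable (fun k : ℤ => Real.exp (-(1/T) * (k:ℝ)^2)) :=
        summable_gauss (by positivity)
      have hs2 : Summable (fun k : ℤ => Real.exp (-(2/T) * (k:ℝ)^2)) :=
        summable_gauss (by positivity)
      have hfsum : Summable (fun k : ℤ =>
          1 / (1 + Real.exp (-(T * Real.log ((2*N+1) / Real.sqrt (π*T)) - (k:ℝ)^2) / T))) :=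
        Summable.of_nonneg_of_le (fun k => by positivity) (fun k => (hfb k).2)
          (hs1.mul_left (1/c))
      have hE1 : ∑' k : ℤ, Real.exp (-(1/T) * (k:ℝ)^2) = Real.sqrt (π*T) * θ T := poisson hT
      have hE2le : ∑' k : ℤ, Real.exp (-(2/T) * (k:ℝ)^2)
          ≤ ∑' k : ℤ, Real.exp (-(1/T) * (k:ℝ)^2) := by
        refine Summable.tsum_le_tsum (fun k => Real.exp_le_exp.mpr ?_) hs2 hs1
        have h0 : (0:ℝ) ≤ (k:ℝ)^2 := sq_nonneg _
        have hkT : (0:ℝ) ≤ (k:ℝ)^2 / T := by positivity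
        have hexp : -(2/T) * (k:ℝ)^2 = -((k:ℝ)^2/T) - (k:ℝ)^2/T := by ring
        have hexp1 : -(1/T) * (k:ℝ)^2 = -((k:ℝ)^2/T) := by ring
        rw [hexp, hexp1]
        linarith
      have hcalc1 : (1/c) * (Real.sqrt (π*T) * θ T) = (2*N+1) * θ T := by
        rw [hc]; field_simp
      have hcalc2 : (1/c^2) * (Real.sqrt (π*T) * θ T) = (2*N+1)^2 * θ T / Real.sqrt (π*T) := by
        rw [hc]; field_simp
      constructor
      · calc (2*N+1 : ℝ) * θ T - (2*N+1:ℝ)^2 * θ T / Real.sqrt (π*T)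
            = (1/c) * (Real.sqrt (π*T) * θ T) - (1/c^2) * (Real.sqrt (π*T) * θ T) := by
              rw [hcalc1, hcalc2]
          _ = (1/c) * ∑' k : ℤ, Real.exp (-(1/T) * (k:ℝ)^2)
              - (1/c^2) * ∑' k : ℤ, Real.exp (-(1/T) * (k:ℝ)^2) := by rw [hE1]
          _ ≤ (1/c) * ∑' k : ℤ, Real.exp (-(1/T) * (k:ℝ)^2)
              - (1/c^2) * ∑' k : ℤ, Real.exp (-(2/T) * (k:ℝ)^2) := by
              have := mul_le_mul_of_nonneg_left hE2le (by positivity : (0:ℝ) ≤ 1/c^2)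
              linarith
          _ = (∑' k : ℤ, (1/c) * Real.exp (-(1/T) * (k:ℝ)^2))
              - ∑' k : ℤ, (1/c^2) * Real.exp (-(2/T) * (k:ℝ)^2) := by
              rw [tsum_mul_left, tsum_mul_left]
          _ = ∑' k : ℤ, ((1/c) * Real.exp (-(1/T) * (k:ℝ)^2)
              - (1/c^2) * Real.exp (-(2/T) * (k:ℝ)^2)) :=
              (Summable.tsum_sub (hs1.mul_left (1/c)) (hs2.mul_left (1/c^2))).symm
          _ ≤ _ := Summable.tsum_le_tsum (fun k => (hfb k).1)
              ((hs1.mul_left (1/c)).sub (hs2.mul_left (1/c^2))) hfsum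
      · calc (∑' k : ℤ, 1 / (1 + Real.exp (-(T * Real.log ((2*N+1) / Real.sqrt (π*T)) -
              (k:ℝ)^2) / T)))
            ≤ ∑' k : ℤ, (1/c) * Real.exp (-(1/T) * (k:ℝ)^2) :=
              Summable.tsum_le_tsum (fun k => (hfb k).2) hfsum (hs1.mul_left (1/c))
          _ = (1/c) * ∑' k : ℤ, Real.exp (-(1/T) * (k:ℝ)^2) := tsum_mul_left
          _ = (2*N+1 : ℝ) * θ T := by rw [hE1, hcalc1]
    exact tendsto_of_tendsto_of_tendsto_of_le_of_le' hL hU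
      (hbound.mono fun T h => h.1) (hbound.mono fun T h => h.2)
  have final := key.const_mul (1 / (2*π))
  convert final using 2
  ring
end
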